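/- Let G=(A,B,E) be a bipartite graph and let W1 and W2 be two disjoint nonempty sets of pendant blocks of G with M(W1 ∪ W2) > 0. Then there exist w1 ∈ W1 and w2 ∈ W2 that form a legal pair and satisfy M(W1 ∪ W2 − {w1, w2}) = M(W1 ∪ W2) − 1. -/

import Mathlib

open SimpleGraph

namespace AugBic

noncomputable section

variable {V : Type*}

/-- Two vertices are biconnected: they are in the same connected component and remain so
after the removal of any single edge or any single vertex other than either of them. -/
def BiconnPair (G : SimpleGraph V) (u v : V) : Prop :=
  G.Reachable u v ∧
  (∀ e ∈ G.edgeSet, (G.deleteEdges {e}).Reachable u v) ∧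
  (∀ w : V, ∀ hu : u ≠ w, ∀ hv : v ≠ w,
    (G.induce {x | x ≠ w}).Reachable ⟨u, hu⟩ ⟨v, hv⟩)

/-- A set of vertices is biconnected if every pair of its vertices is biconnected. -/
def BiconnSet (G : SimpleGraph V) (S : Set V) : Prop :=
  ∀ u ∈ S, ∀ v ∈ S, BiconnPair G u v

/-- A block: (the induced subgraph on) a maximal biconnected set of vertices. -/
def IsBlock (G : SimpleGraph V) (S : Set V) : Prop :=
  S.Nonempty ∧ BiconnSet G S ∧ ∀ T : Set V, S ⊆ T → BiconnSet G T → T = S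

/-- A cut vertex: its removal increases the number of connected components. -/
def IsCutVertex (G : SimpleGraph V) (v : V) : Prop :=
  Nat.card G.ConnectedComponent <
    Nat.card ((G.induce {x | x ≠ v}).ConnectedComponent)

/-- A cut edge: its removal increases the number of connected components. -/
def IsCutEdge (G : SimpleGraph V) (e : Sym2 V) : Prop :=
  e ∈ G.edgeSet ∧
    Nat.card G.ConnectedComponent <
      Nat.card ((G.deleteEdges {e}).ConnectedComponent)

/-- A pendant block: a singular block consisting of a vertex of degree 1, or a
nonsingular block containing exactly one cut vertex. -/
def IsPendantBlock (G : SimpleGraph V) (S : Set V) : Prop :=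
  IsBlock G S ∧
    ((∃ v, S = {v} ∧ (G.neighborSet v).ncard = 1) ∨
     (1 < S.ncard ∧ ∃! v, v ∈ S ∧ IsCutVertex G v))

/-- Λ(G): the set of pendant blocks of `G`. -/
def pendantBlocks (G : SimpleGraph V) : Set (Set V) :=
  {S | IsPendantBlock G S}

/-- A block is of type `P` (for `P = A` or `P = B`) if all its noncut vertices lie in `P`. -/
def TypeOnly (G : SimpleGraph V) (P : Set V) (S : Set V) : Prop :=
  ∀ v ∈ S, ¬IsCutVertex G v → v ∈ P

/-- A block is type AB if it has a noncut vertex in `A` and a noncut vertex in `B`. -/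
def TypeAB (G : SimpleGraph V) (A B : Set V) (S : Set V) : Prop :=
  (∃ v ∈ S, ¬IsCutVertex G v ∧ v ∈ A) ∧ (∃ v ∈ S, ¬IsCutVertex G v ∧ v ∈ B)

/-- A legal pair: two distinct pendant blocks, not both of type A and not both of type B. -/
def LegalPair (G : SimpleGraph V) (A B : Set V) (S T : Set V) : Prop :=
  IsPendantBlock G S ∧ IsPendantBlock G T ∧ S ≠ T ∧
  ¬(TypeOnly G A S ∧ TypeOnly G A T) ∧ ¬(TypeOnly G B S ∧ TypeOnly G B T)

/-- A legal edge: a vertex pair in `A × B` that is not an edge of `G`. -/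
def LegalEdge (G : SimpleGraph V) (A B : Set V) (a b : V) : Prop :=
  a ∈ A ∧ b ∈ B ∧ ¬G.Adj a b

/-- A binding edge for a legal pair: a legal edge joining two noncut vertices,
one from each block of the pair. -/
def BindingEdge (G : SimpleGraph V) (A B : Set V) (S T : Set V) (a b : V) : Prop :=
  LegalEdge G A B a b ∧
  ((a ∈ S ∧ ¬IsCutVertex G a ∧ b ∈ T ∧ ¬IsCutVertex G b) ∨
   (a ∈ T ∧ ¬IsCutVertex G a ∧ b ∈ S ∧ ¬IsCutVertex G b))

/-- A legal matching of a set `Λ'` of pendant blocks: a set of legal pairs between elements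
of `Λ'` such that each element of `Λ'` belongs to at most one pair. -/
def IsLegalMatching (G : SimpleGraph V) (A B : Set V) (Λ' : Set (Set V))
    (N : Set (Set V × Set V)) : Prop :=
  (∀ q ∈ N, q.1 ∈ Λ' ∧ q.2 ∈ Λ' ∧ LegalPair G A B q.1 q.2) ∧
  (∀ q ∈ N, ∀ q' ∈ N, q ≠ q' →
    ({q.1, q.2} ∩ {q'.1, q'.2} : Set (Set V)) = ∅)

/-- M(Λ'): the maximum cardinality of a legal matching of `Λ'`. -/
def maxMatching (G : SimpleGraph V) (A B : Set V) (Λ' : Set (Set V)) : ℕ :=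
  sSup {k | ∃ N, IsLegalMatching G A B Λ' N ∧ N.ncard = k}

/-- R(Λ') = |Λ'| − 2·M(Λ'). -/
def Rnum (G : SimpleGraph V) (A B : Set V) (Λ' : Set (Set V)) : ℕ :=
  Λ'.ncard - 2 * maxMatching G A B Λ'

/-- A graph is componentwise biconnected if every connected component is a block. -/
def ComponentwiseBiconnected (G : SimpleGraph V) : Prop :=
  ∀ c : G.ConnectedComponent, IsBlock G c.supp

/-- D(G,u): the number of connected components of X − {u}, where X is the
connected component of G containing u. -/
def Dnum (G : SimpleGraph V) (u : V) : ℕ :=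
  Nat.card ((G.induce {v | G.Reachable u v ∧ v ≠ u}).ConnectedComponent)

/-- C(G): the number of connected components of G that are not blocks. -/
def Cnum (G : SimpleGraph V) : ℕ :=
  Nat.card {c : G.ConnectedComponent // ¬IsBlock G c.supp}

/-- η(G) = max{ max_u D(G,u) + C(G) − 2, M(Λ(G)) + R(Λ(G)) }. -/
def eta (G : SimpleGraph V) (A B : Set V) : ℕ :=
  max ((⨆ u : V, Dnum G u) + Cnum G - 2)
      (maxMatching G A B (pendantBlocks G) + Rnum G A B (pendantBlocks G))

/-- A biconnector: a set of legal edges whose addition makes `G` componentwise biconnected. -/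
def IsBiconnector (G : SimpleGraph V) (A B : Set V) (L : Set (Sym2 V)) : Prop :=
  (∀ e ∈ L, ∃ a b : V, e = s(a, b) ∧ LegalEdge G A B a b) ∧
  ComponentwiseBiconnected (G ⊔ SimpleGraph.fromEdgeSet L)

/-- B(G): the minimum number of edges of a biconnector of `G`. -/
def Bnum (G : SimpleGraph V) (A B : Set V) : ℕ :=
  sInf {k | ∃ L, IsBiconnector G A B L ∧ L.ncard = k}

/-- A connected component is an isolated edge. -/
def IsIsolatedEdgeComp (G : SimpleGraph V) (c : G.ConnectedComponent) : Prop :=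
  ∃ u v : V, G.Adj u v ∧ c.supp = {u, v}

/-- C1(G): the number of components that are neither isolated edges nor blocks. -/
def C1num (G : SimpleGraph V) : ℕ :=
  Nat.card {c : G.ConnectedComponent // ¬IsIsolatedEdgeComp G c ∧ ¬IsBlock G c.supp}

/-- C2(G): the number of isolated-edge components. -/
def C2num (G : SimpleGraph V) : ℕ :=
  Nat.card {c : G.ConnectedComponent // IsIsolatedEdgeComp G c}

/-- C3(G): the number of components that are nonsingular blocks. -/
def C3num (G : SimpleGraph V) : ℕ :=
  Nat.card {c : G.ConnectedComponent // IsBlock G c.supp ∧ 1 < c.supp.ncard}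

/-- A cut vertex `u` is critical if D(G,u) − 1 = M(Λ(G)) + R(Λ(G)). -/
def Critical (G : SimpleGraph V) (A B : Set V) (u : V) : Prop :=
  IsCutVertex G u ∧
    Dnum G u - 1 = maxMatching G A B (pendantBlocks G) + Rnum G A B (pendantBlocks G)

/-- A cut vertex `u` is massive if D(G,u) − 1 > M(Λ(G)) + R(Λ(G)). -/
def Massive (G : SimpleGraph V) (A B : Set V) (u : V) : Prop :=
  IsCutVertex G u ∧
    maxMatching G A B (pendantBlocks G) + Rnum G A B (pendantBlocks G) < Dnum G u - 1

/-- Vertices of the block tree: blocks (b-vertices), cut vertices and cut edges (c-vertices). -/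
inductive BTV (V : Type*) where
  | blk : Set V → BTV V
  | cv : V → BTV V
  | ce : Sym2 V → BTV V

/-- Valid vertices of the block tree of `G`: nonsingular blocks and singular pendant blocks
(b-vertices), together with cut vertices and cut edges (c-vertices). -/
def IsBTVert (G : SimpleGraph V) : BTV V → Prop
  | .blk S => IsBlock G S ∧ (1 < S.ncard ∨ ∃ v, S = {v} ∧ (G.neighborSet v).ncard = 1)
  | .cv v => IsCutVertex G v
  | .ce e => IsCutEdge G e

/-- Adjacency of the block tree: a nonsingular block is joined to each cut vertex in it,
a cut vertex to each cut edge incident to it, and a cut edge to each singular (pendant)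
block containing one of its endpoints. -/
def btAdj (G : SimpleGraph V) : BTV V → BTV V → Prop
  | .blk _, .blk _ => False
  | .blk S, .cv c => 1 < S.ncard ∧ c ∈ S
  | .blk S, .ce e => ∃ v, S = {v} ∧ v ∈ e
  | .cv c, .blk S => 1 < S.ncard ∧ c ∈ S
  | .cv _, .cv _ => False
  | .cv c, .ce e => c ∈ e
  | .ce e, .blk S => ∃ v, S = {v} ∧ v ∈ e
  | .ce e, .cv c => c ∈ e
  | .ce _, .ce _ => False

/-- The vertex type of the block tree Ψ(G). -/
abbrev BTVert (G : SimpleGraph V) := {x : BTV V // IsBTVert G x}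

/-- The block tree Ψ(G). -/
def blockTree (G : SimpleGraph V) : SimpleGraph (BTVert G) where
  Adj x y := btAdj G x.1 y.1
  symm := ⟨by
    rintro ⟨x, hx⟩ ⟨y, hy⟩ h
    cases x <;> cases y <;> simp_all [btAdj]⟩
  loopless := ⟨by
    rintro ⟨x, hx⟩ h
    cases x <;> simp_all [btAdj]⟩

/-- Degree of a vertex of the block tree. -/
def btDeg (G : SimpleGraph V) (x : BTVert G) : ℕ :=
  Nat.card ((blockTree G).neighborSet x)

/-- A path is branchless if all its internal vertices have degree two. -/
def Branchless {W : Type*} (T : SimpleGraph W) {x y : W} (p : T.Walk x y) : Prop :=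
  p.IsPath ∧ ∀ z ∈ p.support, z ≠ x → z ≠ y → Nat.card (T.neighborSet z) = 2

/-- A leaf clings to a vertex `v` if there is a branchless path between it and `v`. -/
def Clings {W : Type*} (T : SimpleGraph W) (l v : W) : Prop :=
  ∃ p : T.Walk l v, Branchless T p



section AuxLemmas

private lemma prop_swap {a1 b1 a2 b2 a3 b3 a4 b4 : Prop}
    (h1 : ¬(a1∧b1)) (h2 : ¬(a2∧b2)) (h3 : ¬(a3∧b3)) (h4 : ¬(a4∧b4))
    (hxy1 : ¬(a1∧a2)) (hxy2 : ¬(b1∧b2)) (huv1 : ¬(a3∧a4)) (huv2 : ¬(b3∧b4)) :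
    (¬(a1∧a3) ∧ ¬(b1∧b3) ∧ ¬(a2∧a4) ∧ ¬(b2∧b4)) ∨
    (¬(a1∧a4) ∧ ¬(b1∧b4) ∧ ¬(a2∧a3) ∧ ¬(b2∧b3)) := by
  by_cases h13 : a1 ∧ a3
  · exact Or.inr ⟨fun h => huv1 ⟨h13.2, h.2⟩, fun h => h1 ⟨h13.1, h.1⟩,
      fun h => hxy1 ⟨h13.1, h.1⟩, fun h => h3 ⟨h13.2, h.2⟩⟩
  by_cases h24 : a2 ∧ a4
  · exact Or.inr ⟨fun h => hxy1 ⟨h.1, h24.1⟩, fun h => h4 ⟨h24.2, h.2⟩,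
      fun h => huv1 ⟨h.2, h24.2⟩, fun h => h2 ⟨h24.1, h.1⟩⟩
  by_cases g13 : b1 ∧ b3
  · exact Or.inr ⟨fun h => h1 ⟨h.1, g13.1⟩, fun h => huv2 ⟨g13.2, h.2⟩,
      fun h => h3 ⟨h.2, g13.2⟩, fun h => hxy2 ⟨g13.1, h.1⟩⟩
  by_cases g24 : b2 ∧ b4
  · exact Or.inr ⟨fun h => h4 ⟨h.2, g24.2⟩, fun h => hxy2 ⟨h.1, g24.1⟩,
      fun h => h2 ⟨h.1, g24.1⟩, fun h => huv2 ⟨h.2, g24.2⟩⟩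
  · exact Or.inl ⟨h13, g13, h24, g24⟩

private lemma prop_one {a1 b1 a2 b2 a3 b3 : Prop}
    (h3 : ¬(a3∧b3)) (hxy1 : ¬(a1∧a2)) (hxy2 : ¬(b1∧b2)) :
    (¬(a1∧a3) ∧ ¬(b1∧b3)) ∨ (¬(a2∧a3) ∧ ¬(b2∧b3)) := by
  by_cases h13 : a1 ∧ a3
  · exact Or.inr ⟨fun h => hxy1 ⟨h13.1, h.1⟩, fun h => h3 ⟨h13.2, h.2⟩⟩
  by_cases g13 : b1 ∧ b3
  · exact Or.inr ⟨fun h => h3 ⟨h.2, g13.2⟩, fun h => hxy2 ⟨g13.1, h.1⟩⟩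
  · exact Or.inl ⟨h13, g13⟩

private lemma reach_avoid (G : SimpleGraph V) {v a : V} (hnb : G.neighborSet v = {a}) :
    ∀ (n : ℕ) (x y : V) (hx : x ≠ v) (hy : y ≠ v) (p : G.Walk x y), p.length ≤ n →
      (G.induce {z | z ≠ v}).Reachable ⟨x, hx⟩ ⟨y, hy⟩ := by
  intro n
  induction n with
  | zero =>
    intro x y hx hy p hp
    have h0 : x = y := p.eq_of_length_eq_zero (Nat.le_zero.mp hp)
    subst h0
    exact Reachable.refl _
  | succ n ih =>
    intro x y hx hy p hp
    cases p with
    | nil => exact Reachable.refl _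
    | @cons _ w _ h q =>
      by_cases hw : w = v
      · cases q with
        | nil => exact absurd hw hy
        | @cons _ w2 _ h2 q2 =>
          have hxa : x = a := by
            have hmem : x ∈ G.neighborSet v := by rw [← hw]; exact h.symm
            rwa [hnb] at hmem
          have hw2a : w2 = a := by
            have hmem : w2 ∈ G.neighborSet v := by rw [← hw]; exact h2
            rwa [hnb] at hmem
          have hw2x : w2 = x := hw2a.trans hxa.symm
          subst hw2x
          refine ih _ y hx hy q2 ?_
          simp only [SimpleGraph.Walk.length_cons] at hp
          omega
      · have step : (G.induce {z | z ≠ v}).Adj ⟨x, hx⟩ ⟨w, hw⟩ := h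
        refine step.reachable.trans (ih w y hw hy q ?_)
        simp only [SimpleGraph.Walk.length_cons] at hp
        omega

private lemma leaf_not_cut [Fintype V] (G : SimpleGraph V) {v : V}
    (hdeg : (G.neighborSet v).ncard = 1) : ¬ IsCutVertex G v := by
  obtain ⟨a, hnb⟩ := Set.ncard_eq_one.mp hdeg
  rw [IsCutVertex, not_lt]
  classical
  let incl : G.induce {z | z ≠ v} →g G := ⟨Subtype.val, fun hadj => hadj⟩
  let f : (G.induce {z | z ≠ v}).ConnectedComponent → G.ConnectedComponent :=
    ConnectedComponent.lift (fun x => G.connectedComponentMk x.1)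
      (fun x y p _ => ConnectedComponent.sound ⟨p.map incl⟩)
  have hinj : Function.Injective f := by
    intro c d
    refine ConnectedComponent.ind₂ (fun x y h => ?_) c d
    have hxy : G.Reachable x.1 y.1 := ConnectedComponent.exact h
    obtain ⟨p⟩ := hxy
    apply ConnectedComponent.sound
    have := reach_avoid G hnb p.length x.1 y.1 x.2 y.2 p le_rfl
    exact this
  exact Nat.card_le_card_of_injective f hinj

private lemma pendant_noncut [Fintype V] (G : SimpleGraph V) {S : Set V}
    (hS : IsPendantBlock G S) : ∃ x ∈ S, ¬ IsCutVertex G x := by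
  obtain ⟨_, hcase⟩ := hS
  rcases hcase with ⟨x, rfl, hdeg⟩ | ⟨hcard, hexu⟩
  · exact ⟨x, rfl, leaf_not_cut G hdeg⟩
  · obtain ⟨u, w, hu, hw, hne⟩ := (Set.one_lt_ncard_iff (Set.toFinite _)).mp hcard
    by_cases hcu : IsCutVertex G u
    · refine ⟨w, hw, fun hcw => hne ?_⟩
      obtain ⟨z, _, huniq⟩ := hexu
      exact (huniq u ⟨hu, hcu⟩).trans (huniq w ⟨hw, hcw⟩).symm
    · exact ⟨u, hu, hcu⟩

private lemma pendant_not_both [Fintype V] (G : SimpleGraph V) {A B : Set V} {S : Set V}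
    (hdisj : Disjoint A B) (hS : IsPendantBlock G S) :
    ¬ (TypeOnly G A S ∧ TypeOnly G B S) := by
  rintro ⟨hA, hB⟩
  obtain ⟨x, hx, hnc⟩ := pendant_noncut G hS
  exact Set.disjoint_left.mp hdisj (hA x hx hnc) (hB x hx hnc)

private lemma legalPair_symm {G : SimpleGraph V} {A B S T : Set V}
    (h : LegalPair G A B S T) : LegalPair G A B T S := by
  obtain ⟨p1, p2, p3, p4, p5⟩ := h
  exact ⟨p2, p1, p3.symm, fun hh => p4 ⟨hh.2, hh.1⟩, fun hh => p5 ⟨hh.2, hh.1⟩⟩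

private lemma disj_elim {α : Type*} {a b c d : α} (h : ({a, b} ∩ {c, d} : Set α) = ∅) :
    a ≠ c ∧ a ≠ d ∧ b ≠ c ∧ b ≠ d := by
  have hh := Set.eq_empty_iff_forall_notMem.mp h
  simp only [Set.mem_inter_iff, Set.mem_insert_iff, Set.mem_singleton_iff] at hh
  exact ⟨fun e => hh a ⟨Or.inl rfl, Or.inl e⟩, fun e => hh a ⟨Or.inl rfl, Or.inr e⟩,
    fun e => hh b ⟨Or.inr rfl, Or.inl e⟩, fun e => hh b ⟨Or.inr rfl, Or.inr e⟩⟩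

private lemma disj_intro {α : Type*} {a b c d : α}
    (h1 : a ≠ c) (h2 : a ≠ d) (h3 : b ≠ c) (h4 : b ≠ d) :
    ({a, b} ∩ {c, d} : Set α) = ∅ := by
  rw [Set.eq_empty_iff_forall_notMem]
  rintro x ⟨hx1, hx2⟩
  simp only [Set.mem_insert_iff, Set.mem_singleton_iff] at hx1 hx2
  rcases hx1 with rfl | rfl <;> rcases hx2 with h | h <;> tauto

private lemma ne_of_disj {α : Type*} {W1 W2 : Set α} (h : Disjoint W1 W2) {a b : α}
    (ha : a ∈ W1) (hb : b ∈ W2) : a ≠ b :=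
  fun e => Set.disjoint_left.mp h ha (e ▸ hb)

private lemma ne_of_disj' {α : Type*} {W1 W2 : Set α} (h : Disjoint W1 W2) {a b : α}
    (ha : a ∈ W1) (hb : b ∈ W2) : b ≠ a :=
  fun e => Set.disjoint_left.mp h ha (e ▸ hb)

variable [Fintype V]

private lemma matching_bdd (G : SimpleGraph V) (A B : Set V) (L : Set (Set V)) :
    BddAbove {k | ∃ N, IsLegalMatching G A B L N ∧ N.ncard = k} := by
  classical
  refine ⟨Nat.card (Set V × Set V), ?_⟩
  rintro k ⟨N, _, rfl⟩
  calc N.ncard ≤ (Set.univ : Set (Set V × Set V)).ncard :=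
        Set.ncard_le_ncard (Set.subset_univ N) (Set.toFinite _)
    _ = _ := Set.ncard_univ _

private lemma exists_max_matching (G : SimpleGraph V) (A B : Set V) (L : Set (Set V)) :
    ∃ N, IsLegalMatching G A B L N ∧ N.ncard = maxMatching G A B L := by
  have hne : ({k | ∃ N, IsLegalMatching G A B L N ∧ N.ncard = k} : Set ℕ).Nonempty :=
    ⟨0, ∅, ⟨fun q hq => absurd hq (Set.notMem_empty q),
      fun q hq => absurd hq (Set.notMem_empty q)⟩, by simp⟩
  exact Nat.sSup_mem hne (matching_bdd G A B L)

private lemma matching_le {G : SimpleGraph V} {A B : Set V} {L : Set (Set V)}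
    {N : Set (Set V × Set V)} (hN : IsLegalMatching G A B L N) :
    N.ncard ≤ maxMatching G A B L :=
  le_csSup (matching_bdd G A B L) ⟨N, hN, rfl⟩

private lemma matching_mono {G : SimpleGraph V} {A B : Set V} {L L' : Set (Set V)}
    {N N' : Set (Set V × Set V)} (hN : IsLegalMatching G A B L N) (hsub : N' ⊆ N)
    (hmem : ∀ q ∈ N', q.1 ∈ L' ∧ q.2 ∈ L') : IsLegalMatching G A B L' N' :=
  ⟨fun q hq => ⟨(hmem q hq).1, (hmem q hq).2, (hN.1 q (hsub hq)).2.2⟩,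
   fun q hq q' hq' hne => hN.2 q (hsub hq) q' (hsub hq') hne⟩

private lemma matching_insert {G : SimpleGraph V} {A B : Set V} {L : Set (Set V)}
    {N : Set (Set V × Set V)} (hN : IsLegalMatching G A B L N) (p : Set V × Set V)
    (hp1 : p.1 ∈ L) (hp2 : p.2 ∈ L) (hlp : LegalPair G A B p.1 p.2)
    (hfresh : ∀ q ∈ N, ({p.1, p.2} ∩ {q.1, q.2} : Set (Set V)) = ∅) :
    IsLegalMatching G A B L (insert p N) := by
  constructor
  · rintro q (rfl | hq)
    · exact ⟨hp1, hp2, hlp⟩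
    · exact hN.1 q hq
  · rintro q (rfl | hq) q' (rfl | hq') hne
    · exact absurd rfl hne
    · exact hfresh q' hq'
    · rw [Set.inter_comm]; exact hfresh q hq
    · exact hN.2 q hq q' hq' hne

private lemma max_remove {G : SimpleGraph V} {A B : Set V} {L : Set (Set V)} {w1 w2 : Set V}
    (hw1 : w1 ∈ L) (hw2 : w2 ∈ L) (hlp : LegalPair G A B w1 w2) :
    maxMatching G A B (L \ {w1, w2}) + 1 ≤ maxMatching G A B L := by
  obtain ⟨N, hN, hcard⟩ := exists_max_matching G A B (L \ {w1, w2})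
  have hnm : (w1, w2) ∉ N := fun hmem => (hN.1 _ hmem).1.2 (Or.inl rfl)
  have hbig : IsLegalMatching G A B L N :=
    matching_mono hN subset_rfl (fun q hq => ⟨(hN.1 q hq).1.1, (hN.1 q hq).2.1.1⟩)
  have hins : IsLegalMatching G A B L (insert (w1, w2) N) := by
    refine matching_insert hbig (w1, w2) hw1 hw2 hlp (fun q hq => ?_)
    exact disj_intro (fun e => (hN.1 q hq).1.2 (Or.inl e.symm))
      (fun e => (hN.1 q hq).2.1.2 (Or.inl e.symm))
      (fun e => (hN.1 q hq).1.2 (Or.inr e.symm))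
      (fun e => (hN.1 q hq).2.1.2 (Or.inr e.symm))
  have hcnt : (insert (w1, w2) N).ncard = N.ncard + 1 :=
    Set.ncard_insert_of_notMem hnm (Set.toFinite _)
  have := matching_le hins
  omega

private lemma core (G : SimpleGraph V) (A B : Set V) (hdisj : Disjoint A B)
    (W1 W2 : Set (Set V)) (hW1 : W1 ⊆ pendantBlocks G) (hW2 : W2 ⊆ pendantBlocks G)
    (hWdisj : Disjoint W1 W2) (hW2ne : W2.Nonempty)
    (N : Set (Set V × Set V)) (hN : IsLegalMatching G A B (W1 ∪ W2) N)
    (hwithin : ∀ r ∈ N, (r.1 ∈ W1 ∧ r.2 ∈ W1) ∨ (r.1 ∈ W2 ∧ r.2 ∈ W2))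
    (q : Set V × Set V) (hq : q ∈ N) (hq1 : q.1 ∈ W1) (hq2 : q.2 ∈ W1) :
    ∃ w1 ∈ W1, ∃ w2 ∈ W2, LegalPair G A B w1 w2 ∧
      ∃ N', IsLegalMatching G A B ((W1 ∪ W2) \ {w1, w2}) N' ∧ N'.ncard + 1 = N.ncard := by
  classical
  have hlq := (hN.1 q hq).2.2
  have nb : ∀ S ∈ W1 ∪ W2, ¬(TypeOnly G A S ∧ TypeOnly G B S) := by
    rintro S (hS | hS)
    · exact pendant_not_both G hdisj (hW1 hS)
    · exact pendant_not_both G hdisj (hW2 hS)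
  by_cases hq' : ∃ r ∈ N, r.1 ∈ W2
  · obtain ⟨r, hrN, hr1⟩ := hq'
    have hr2 : r.2 ∈ W2 := by
      rcases hwithin r hrN with ⟨h1, _⟩ | ⟨_, h2⟩
      · exact absurd hr1 (Set.disjoint_left.mp hWdisj h1)
      · exact h2
    have hqr : q ≠ r := by
      intro e; subst e; exact Set.disjoint_left.mp hWdisj hq1 hr1
    have hlr := (hN.1 r hrN).2.2
    have hswap := prop_swap (nb q.1 (Or.inl hq1)) (nb q.2 (Or.inl hq2))
      (nb r.1 (Or.inr hr1)) (nb r.2 (Or.inr hr2))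
      hlq.2.2.2.1 hlq.2.2.2.2 hlr.2.2.2.1 hlr.2.2.2.2
    -- common facts
    have hq12 : q.1 ≠ q.2 := hlq.2.2.1
    have hr12 : r.1 ≠ r.2 := hlr.2.2.1
    have hd : ∀ s ∈ N, s ≠ q → s ≠ r →
        (s.1 ≠ q.1 ∧ s.1 ≠ q.2 ∧ s.2 ≠ q.1 ∧ s.2 ≠ q.2) ∧
        (s.1 ≠ r.1 ∧ s.1 ≠ r.2 ∧ s.2 ≠ r.1 ∧ s.2 ≠ r.2) :=
      fun s hsN hsq hsr =>
        ⟨disj_elim (hN.2 s hsN q hq hsq), disj_elim (hN.2 s hsN r hrN hsr)⟩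
    have hrq : r ∈ N \ {q} := ⟨hrN, fun e => hqr (e.symm)⟩
    have hc1 : (N \ {q}).ncard + 1 = N.ncard :=
      Set.ncard_diff_singleton_add_one hq (Set.toFinite _)
    have hc2 : ((N \ {q}) \ {r}).ncard + 1 = (N \ {q}).ncard :=
      Set.ncard_diff_singleton_add_one hrq (Set.toFinite _)
    have hM0sub : (N \ {q}) \ {r} ⊆ N := fun s hs => hs.1.1
    rcases hswap with ⟨c1, c2, c3, c4⟩ | ⟨c1, c2, c3, c4⟩
    · -- pair (q.1, r.1), leftover (q.2, r.2)
      refine ⟨q.1, hq1, r.1, hr1, ⟨hW1 hq1, hW2 hr1,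
        fun e => ne_of_disj hWdisj hq1 hr1 e, c1, c2⟩, ?_⟩
      refine ⟨insert (q.2, r.2) ((N \ {q}) \ {r}), ?_, ?_⟩
      · have hM0 : IsLegalMatching G A B ((W1 ∪ W2) \ {q.1, r.1}) ((N \ {q}) \ {r}) := by
          refine matching_mono hN hM0sub (fun s hs => ?_)
          obtain ⟨hdq, hdr⟩ := hd s (hM0sub hs) hs.1.2 hs.2
          exact ⟨⟨(hN.1 s (hM0sub hs)).1, fun hm => hm.elim hdq.1 hdr.1⟩,
            ⟨(hN.1 s (hM0sub hs)).2.1, fun hm => hm.elim hdq.2.2.1 hdr.2.2.1⟩⟩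
        refine matching_insert hM0 (q.2, r.2) ?_ ?_ ?_ ?_
        · exact ⟨Or.inl hq2, fun hm => hm.elim (fun e => hq12 e.symm)
            (fun e => ne_of_disj hWdisj hq2 hr1 e)⟩
        · exact ⟨Or.inr hr2, fun hm => hm.elim
            (fun e => ne_of_disj' hWdisj hq1 hr2 e) (fun e => hr12 (Eq.symm e))⟩
        · exact ⟨hW1 hq2, hW2 hr2,
            fun e => ne_of_disj hWdisj hq2 hr2 e, c3, c4⟩
        · intro s hs
          obtain ⟨hdq, hdr⟩ := hd s (hM0sub hs) hs.1.2 hs.2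
          exact disj_intro hdq.2.1.symm hdq.2.2.2.symm hdr.2.1.symm hdr.2.2.2.symm
      · have hnm : (q.2, r.2) ∉ (N \ {q}) \ {r} := by
          intro hs
          obtain ⟨hdq, _⟩ := hd _ (hM0sub hs) hs.1.2 hs.2
          exact hdq.2.1 rfl
        rw [Set.ncard_insert_of_notMem hnm (Set.toFinite _)]
        omega
    · -- pair (q.1, r.2), leftover (q.2, r.1)
      refine ⟨q.1, hq1, r.2, hr2, ⟨hW1 hq1, hW2 hr2,
        fun e => ne_of_disj hWdisj hq1 hr2 e, c1, c2⟩, ?_⟩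
      refine ⟨insert (q.2, r.1) ((N \ {q}) \ {r}), ?_, ?_⟩
      · have hM0 : IsLegalMatching G A B ((W1 ∪ W2) \ {q.1, r.2}) ((N \ {q}) \ {r}) := by
          refine matching_mono hN hM0sub (fun s hs => ?_)
          obtain ⟨hdq, hdr⟩ := hd s (hM0sub hs) hs.1.2 hs.2
          exact ⟨⟨(hN.1 s (hM0sub hs)).1, fun hm => hm.elim hdq.1 hdr.2.1⟩,
            ⟨(hN.1 s (hM0sub hs)).2.1, fun hm => hm.elim hdq.2.2.1 hdr.2.2.2⟩⟩
        refine matching_insert hM0 (q.2, r.1) ?_ ?_ ?_ ?_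
        · exact ⟨Or.inl hq2, fun hm => hm.elim (fun e => hq12 e.symm)
            (fun e => ne_of_disj hWdisj hq2 hr2 e)⟩
        · exact ⟨Or.inr hr1, fun hm => hm.elim
            (fun e => ne_of_disj' hWdisj hq1 hr1 e) (fun e => hr12 e)⟩
        · exact ⟨hW1 hq2, hW2 hr1,
            fun e => ne_of_disj hWdisj hq2 hr1 e, c3, c4⟩
        · intro s hs
          obtain ⟨hdq, hdr⟩ := hd s (hM0sub hs) hs.1.2 hs.2
          exact disj_intro hdq.2.1.symm hdq.2.2.2.symm hdr.1.symm hdr.2.2.1.symm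
      · have hnm : (q.2, r.1) ∉ (N \ {q}) \ {r} := by
          intro hs
          obtain ⟨hdq, _⟩ := hd _ (hM0sub hs) hs.1.2 hs.2
          exact hdq.2.1 rfl
        rw [Set.ncard_insert_of_notMem hnm (Set.toFinite _)]
        omega
  · -- all pairs of N lie within W1
    have hall : ∀ r ∈ N, r.1 ∈ W1 ∧ r.2 ∈ W1 := fun r hr =>
      (hwithin r hr).resolve_right (fun h => hq' ⟨r, hr, h.1⟩)
    obtain ⟨w2, hw2⟩ := hW2ne
    have hun : ∀ r ∈ N, r.1 ≠ w2 ∧ r.2 ≠ w2 := fun r hr =>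
      ⟨fun e => Set.disjoint_left.mp hWdisj (e ▸ (hall r hr).1) hw2,
       fun e => Set.disjoint_left.mp hWdisj (e ▸ (hall r hr).2) hw2⟩
    have hone := prop_one (a1 := TypeOnly G A q.1) (b1 := TypeOnly G B q.1)
      (a2 := TypeOnly G A q.2) (b2 := TypeOnly G B q.2)
      (nb w2 (Or.inr hw2)) hlq.2.2.2.1 hlq.2.2.2.2
    have hq12 : q.1 ≠ q.2 := hlq.2.2.1
    have hc1 : (N \ {q}).ncard + 1 = N.ncard :=
      Set.ncard_diff_singleton_add_one hq (Set.toFinite _)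
    rcases hone with ⟨c1, c2⟩ | ⟨c1, c2⟩
    · refine ⟨q.1, hq1, w2, hw2, ⟨hW1 hq1, hW2 hw2,
        fun e => ne_of_disj hWdisj hq1 hw2 e, c1, c2⟩, N \ {q}, ?_, hc1⟩
      refine matching_mono hN Set.diff_subset (fun s hs => ?_)
      have hdq := disj_elim (hN.2 s hs.1 q hq hs.2)
      exact ⟨⟨(hN.1 s hs.1).1, fun hm => hm.elim hdq.1 (hun s hs.1).1⟩,
        ⟨(hN.1 s hs.1).2.1, fun hm => hm.elim hdq.2.2.1 (hun s hs.1).2⟩⟩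
    · refine ⟨q.2, hq2, w2, hw2, ⟨hW1 hq2, hW2 hw2,
        fun e => ne_of_disj hWdisj hq2 hw2 e, c1, c2⟩, N \ {q}, ?_, hc1⟩
      refine matching_mono hN Set.diff_subset (fun s hs => ?_)
      have hdq := disj_elim (hN.2 s hs.1 q hq hs.2)
      exact ⟨⟨(hN.1 s hs.1).1, fun hm => hm.elim hdq.2.1 (hun s hs.1).1⟩,
        ⟨(hN.1 s hs.1).2.1, fun hm => hm.elim hdq.2.2.2 (hun s hs.1).2⟩⟩

end AuxLemmas

theorem stmt_2 [Fintype V] (G : SimpleGraph V) (A B : Set V)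
    (hdisj : Disjoint A B) (hcov : A ∪ B = Set.univ)
    (hbip : ∀ u v : V, G.Adj u v → (u ∈ A ∧ v ∈ B) ∨ (u ∈ B ∧ v ∈ A))
    (W1 W2 : Set (Set V))
    (hW1 : W1 ⊆ pendantBlocks G) (hW2 : W2 ⊆ pendantBlocks G)
    (hWdisj : Disjoint W1 W2) (hW1ne : W1.Nonempty) (hW2ne : W2.Nonempty)
    (hM : 0 < maxMatching G A B (W1 ∪ W2)) :
    ∃ w1 ∈ W1, ∃ w2 ∈ W2, LegalPair G A B w1 w2 ∧
      maxMatching G A B ((W1 ∪ W2) \ {w1, w2}) = maxMatching G A B (W1 ∪ W2) - 1 := by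
  classical
  obtain ⟨N, hN, hNcard⟩ := exists_max_matching G A B (W1 ∪ W2)
  have key : ∃ w1 ∈ W1, ∃ w2 ∈ W2, LegalPair G A B w1 w2 ∧
      ∃ N', IsLegalMatching G A B ((W1 ∪ W2) \ {w1, w2}) N' ∧ N'.ncard + 1 = N.ncard := by
    by_cases hcross : ∃ r ∈ N, (r.1 ∈ W1 ∧ r.2 ∈ W2) ∨ (r.1 ∈ W2 ∧ r.2 ∈ W1)
    · obtain ⟨r, hr, hc⟩ := hcross
      have hlr := (hN.1 r hr).2.2
      have hrdiff : ∀ s ∈ N \ {r}, (s.1 ≠ r.1 ∧ s.1 ≠ r.2 ∧ s.2 ≠ r.1 ∧ s.2 ≠ r.2) :=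
        fun s hs => disj_elim (hN.2 s hs.1 r hr hs.2)
      have hcnt : (N \ {r}).ncard + 1 = N.ncard :=
        Set.ncard_diff_singleton_add_one hr (Set.toFinite _)
      rcases hc with ⟨h1, h2⟩ | ⟨h1, h2⟩
      · refine ⟨r.1, h1, r.2, h2, hlr, N \ {r}, ?_, hcnt⟩
        refine matching_mono hN Set.diff_subset (fun s hs => ?_)
        obtain ⟨d1, d2, d3, d4⟩ := hrdiff s hs
        exact ⟨⟨(hN.1 s hs.1).1, fun hm => hm.elim d1 d2⟩,
          ⟨(hN.1 s hs.1).2.1, fun hm => hm.elim d3 d4⟩⟩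
      · refine ⟨r.2, h2, r.1, h1, legalPair_symm hlr, N \ {r}, ?_, hcnt⟩
        refine matching_mono hN Set.diff_subset (fun s hs => ?_)
        obtain ⟨d1, d2, d3, d4⟩ := hrdiff s hs
        exact ⟨⟨(hN.1 s hs.1).1, fun hm => hm.elim d2 d1⟩,
          ⟨(hN.1 s hs.1).2.1, fun hm => hm.elim d4 d3⟩⟩
    · have hwithin : ∀ r ∈ N, (r.1 ∈ W1 ∧ r.2 ∈ W1) ∨ (r.1 ∈ W2 ∧ r.2 ∈ W2) := by
        intro r hr
        rcases (hN.1 r hr).1 with h1 | h1 <;> rcases (hN.1 r hr).2.1 with h2 | h2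
        · exact Or.inl ⟨h1, h2⟩
        · exact absurd ⟨r, hr, Or.inl ⟨h1, h2⟩⟩ hcross
        · exact absurd ⟨r, hr, Or.inr ⟨h1, h2⟩⟩ hcross
        · exact Or.inr ⟨h1, h2⟩
      have hNne : N.Nonempty := Set.nonempty_of_ncard_ne_zero (by omega)
      obtain ⟨r, hr⟩ := hNne
      rcases hwithin r hr with ⟨h1, h2⟩ | ⟨h1, h2⟩
      · exact core G A B hdisj W1 W2 hW1 hW2 hWdisj hW2ne N hN hwithin r hr h1 h2
      · have hN' : IsLegalMatching G A B (W2 ∪ W1) N := by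
          rwa [Set.union_comm]
        have hwithin' : ∀ s ∈ N, (s.1 ∈ W2 ∧ s.2 ∈ W2) ∨ (s.1 ∈ W1 ∧ s.2 ∈ W1) :=
          fun s hs => (hwithin s hs).symm
        obtain ⟨a, ha, b, hb, hlp, N', hN'', hcnt⟩ :=
          core G A B hdisj W2 W1 hW2 hW1 hWdisj.symm hW1ne N hN' hwithin' r hr h1 h2
        refine ⟨b, hb, a, ha, legalPair_symm hlp, N', ?_, hcnt⟩
        have heq : (W2 ∪ W1) \ ({a, b} : Set (Set V)) = (W1 ∪ W2) \ {b, a} := by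
          rw [Set.union_comm W2 W1, Set.pair_comm a b]
        rwa [heq] at hN''
  obtain ⟨w1, h1, w2, h2, hlp, N', hN', hcnt⟩ := key
  refine ⟨w1, h1, w2, h2, hlp, ?_⟩
  have hub := max_remove (L := W1 ∪ W2) (Or.inl h1) (Or.inr h2) hlp
  have hlb := matching_le hN'
  omega


end
end AugBic
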